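/- Let G be a finite nilpotent group and φ an automorphism of G with G = [G, φ]. Write G = P_1 × ⋯ × P_k as the direct product of its Sylow subgroups. Then [P_i, φ] = P_i for each i, and k is at most the cardinality of the minimal left Engel sink 𝓛(φ) of φ in G⟨φ⟩. -/

import Mathlib

/-- The subgroup `[G, φ] = ⟨g⁻¹ g^φ : g ∈ G⟩` for an automorphism `φ` of `G`. -/
def commAut {G : Type} [Group G] (φ : MulAut G) : Subgroup G :=
  Subgroup.closure {x : G | ∃ g : G, x = g⁻¹ * φ g}

/-- Iterated Engel commutator `[u, _n φ]` with `[u, φ] = u⁻¹ u^φ`. -/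
def lEngelAut {G : Type} [Group G] (φ : MulAut G) : G → ℕ → G
  | u, 0 => u
  | u, n + 1 => (lEngelAut φ u n)⁻¹ * φ (lEngelAut φ u n)

/-- A left Engel sink of `φ` (equal to the left Engel sink computed in `G⟨φ⟩`). -/
def IsLeftEngelSinkAut {G : Type} [Group G] (φ : MulAut G) (L : Set G) : Prop :=
  ∀ u : G, ∃ N : ℕ, ∀ n ≥ N, lEngelAut φ u n ∈ L

/-- The minimal left Engel sink of `φ`. -/
def IsMinLeftEngelSinkAut {G : Type} [Group G] (φ : MulAut G) (L : Set G) : Prop :=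
  IsLeftEngelSinkAut φ L ∧ ∀ L' : Set G, IsLeftEngelSinkAut φ L' → L ⊆ L'

section Aux

variable {G : Type} [Group G]

/-- Restriction of an automorphism to an invariant subgroup. -/
def autOfMemIff (φ : MulAut G) (H : Subgroup G) (hH : ∀ g : G, g ∈ H ↔ φ g ∈ H) :
    MulAut H where
  toFun x := ⟨φ x, (hH _).1 x.2⟩
  invFun x := ⟨φ.symm x, (hH _).2 (by simpa using x.2)⟩
  left_inv x := Subtype.ext (φ.symm_apply_apply _)
  right_inv x := Subtype.ext (φ.apply_symm_apply _)
  map_mul' x y := Subtype.ext (map_mul φ _ _)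

lemma lEngel_coe (φ : MulAut G) (H : Subgroup G) (ψ : MulAut H)
    (hψ : ∀ x : H, (ψ x : G) = φ x) (u : H) (n : ℕ) :
    lEngelAut φ (u : G) n = ((lEngelAut ψ u n : H) : G) := by
  induction n with
  | zero => rfl
  | succ n ih =>
      show (lEngelAut φ (u : G) n)⁻¹ * φ (lEngelAut φ (u : G) n) =
        (((lEngelAut ψ u n)⁻¹ * ψ (lEngelAut ψ u n) : H) : G)
      rw [ih, Subgroup.coe_mul, InvMemClass.coe_inv, hψ]

lemma commutator_ne_top_of_nilpotent (H : Type) [Group H] [Nontrivial H]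
    [Group.IsNilpotent H] : commutator H ≠ ⊤ := by
  intro hc
  obtain ⟨n, hn⟩ := nilpotent_iff_lowerCentralSeries.mp ‹Group.IsNilpotent H›
  have htop : ∀ m, (⊤ : Subgroup H).lowerCentralSeries m = ⊤ := by
    intro m
    induction m with
    | zero => exact Subgroup.lowerCentralSeries_zero (S := (⊤ : Subgroup H))
    | succ m ih =>
        rw [Subgroup.lowerCentralSeries_succ, ih]
        show ⁅(⊤ : Subgroup H), ⊤⁆ = ⊤
        rw [← commutator_def]
        exact hc
  rw [htop n] at hn
  exact absurd hn top_ne_bot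

end Aux

/-- Let `G` be a finite nilpotent group and `φ` an automorphism with `G = [G, φ]`.
Then `[P, φ] = P` for every Sylow subgroup `P` of `G`, and the number of primes
dividing `|G|` (the number of factors in the Sylow decomposition of `G`) is at most
the cardinality of the minimal left Engel sink of `φ`. -/
theorem stmt16 (G : Type) [Group G] [Finite G] [Group.IsNilpotent G] (φ : MulAut G)
    (h : commAut φ = ⊤) (L : Set G) (hL : IsMinLeftEngelSinkAut φ L) :
    (∀ (p : ℕ), p.Prime → ∀ P : Sylow p G,
        Subgroup.closure {x : G | ∃ g ∈ (P : Subgroup G), x = g⁻¹ * φ g} = (P : Subgroup G)) ∧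
      (Nat.card G).primeFactors.card ≤ Nat.card L := by
  classical
  have hG0 : (Nat.card G) ≠ 0 := Nat.card_pos.ne'
  have hnorm : ∀ (q : ℕ) [Fact q.Prime] (Q : Sylow q G), (Q : Subgroup G).Normal := by
    intro q _ Q
    exact Sylow.normal_of_normalizerCondition normalizerCondition_of_isNilpotent Q
  have hmemiff : ∀ (q : ℕ) [Fact q.Prime] (Q : Sylow q G) (g : G), g ∈ Q ↔ φ g ∈ Q := by
    intro q _ Q g
    have hc2 : (Q : Subgroup G).comap φ.toMonoidHom = ↑Q :=
      (Sylow.characteristic_of_normal Q (hnorm q Q)).fixed φ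
    have h3 := SetLike.ext_iff.mp hc2 g
    rw [Subgroup.mem_comap] at h3
    exact h3.symm
  set ps := (Nat.card G).primeFactors with hps
  let Pf : ∀ q, Sylow q G := fun _ => default
  have hcomm : Pairwise fun p₁ p₂ : ps => ∀ x y : G, x ∈ Pf p₁ → y ∈ Pf p₂ → Commute x y := by
    rintro ⟨p₁, hp₁⟩ ⟨p₂, hp₂⟩ hne
    haveI := Fact.mk (Nat.prime_of_mem_primeFactors hp₁)
    haveI := Fact.mk (Nat.prime_of_mem_primeFactors hp₂)
    have hne' : p₁ ≠ p₂ := by simpa using hne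
    exact Subgroup.commute_of_normal_of_disjoint _ _ (hnorm _ _) (hnorm _ _)
      (IsPGroup.disjoint_of_ne p₁ p₂ hne' _ _ (Pf p₁).isPGroup' (Pf p₂).isPGroup')
  have hcardP : ∀ q : ps, Nat.card (Pf q) = (q : ℕ) ^ (Nat.card G).factorization q := by
    rintro ⟨q, hq⟩
    haveI := Fact.mk (Nat.prime_of_mem_primeFactors hq)
    exact Sylow.card_eq_multiplicity (Pf q)
  have hprodP : ∏ q : ps, Nat.card (Pf q) = Nat.card G := by
    calc ∏ q : ps, Nat.card (Pf q)
        = ∏ q : ps, (q : ℕ) ^ (Nat.card G).factorization q :=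
          Finset.prod_congr rfl fun q _ => hcardP q
      _ = ∏ q ∈ ps, q ^ (Nat.card G).factorization q :=
          Finset.prod_finset_coe (fun p => p ^ (Nat.card G).factorization p) _
      _ = (Nat.card G).factorization.prod (· ^ ·) := rfl
      _ = Nat.card G := Nat.factorization_prod_pow_eq_self hG0
  let ε := Subgroup.noncommPiCoprod hcomm
  have hinj : Function.Injective ε := by
    apply Subgroup.injective_noncommPiCoprod_of_iSupIndep
    haveI : ∀ q : ps, Fintype (Pf q) := fun q => Fintype.ofFinite _
    apply Subgroup.independent_of_coprime_order hcomm
    rintro ⟨p₁, hp₁⟩ ⟨p₂, hp₂⟩ hne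
    haveI := Fact.mk (Nat.prime_of_mem_primeFactors hp₁)
    haveI := Fact.mk (Nat.prime_of_mem_primeFactors hp₂)
    have hne' : p₁ ≠ p₂ := by simpa using hne
    simpa only [← Nat.card_eq_fintype_card] using
      IsPGroup.coprime_card_of_ne (G := G) p₁ p₂ hne' _ _ (Pf p₁).isPGroup' (Pf p₂).isPGroup'
  have hsurj : Function.Surjective ε := by
    rw [← MonoidHom.range_eq_top]
    apply Subgroup.eq_top_of_card_eq
    have h1 : Nat.card ε.range = Nat.card (∀ q : ps, (Pf q : Subgroup G)) :=
      Nat.card_congr (Equiv.ofInjective ε hinj).symm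
    rw [h1, Nat.card_pi, hprodP]
  let K : ∀ (q : ℕ), Sylow q G → Subgroup G := fun _ Q =>
    Subgroup.closure {x : G | ∃ g ∈ (Q : Subgroup G), x = g⁻¹ * φ g}
  have hKle : ∀ (q : ℕ) [Fact q.Prime] (Q : Sylow q G), K q Q ≤ (Q : Subgroup G) := by
    intro q _ Q
    refine (Subgroup.closure_le _).mpr ?_
    rintro x ⟨g, hg, rfl⟩
    exact mul_mem (inv_mem hg) ((hmemiff q Q g).1 hg)
  have hKcomm : Pairwise fun p₁ p₂ : ps =>
      ∀ x y : G, x ∈ K p₁ (Pf p₁) → y ∈ K p₂ (Pf p₂) → Commute x y := by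
    intro p₁ p₂ hne x y hx hy
    haveI := Fact.mk (Nat.prime_of_mem_primeFactors p₁.2)
    haveI := Fact.mk (Nat.prime_of_mem_primeFactors p₂.2)
    exact hcomm hne x y (hKle _ _ hx) (hKle _ _ hy)
  have hle : commAut φ ≤ ⨆ q : ps, K q (Pf q) := by
    refine (Subgroup.closure_le _).mpr ?_
    rintro x ⟨g, rfl⟩
    obtain ⟨f, rfl⟩ := hsurj g
    let f' : ∀ q : ps, (Pf q : Subgroup G) := fun q =>
      ⟨φ (f q), by
        haveI := Fact.mk (Nat.prime_of_mem_primeFactors q.2)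
        exact (hmemiff _ (Pf q) _).1 (f q).2⟩
    have hφ : φ (ε f) = ε f' := by
      rw [Subgroup.noncommPiCoprod_apply, Subgroup.noncommPiCoprod_apply]
      exact Finset.map_noncommProd _ _ _ φ.toMonoidHom
    have hx : (ε f)⁻¹ * φ (ε f) = ε (f⁻¹ * f') := by
      rw [hφ, map_mul, map_inv]
    rw [hx, Subgroup.noncommPiCoprod_apply]
    apply Subgroup.noncommProd_mem
    intro q _
    apply Subgroup.mem_iSup_of_mem q
    apply Subgroup.subset_closure
    exact ⟨(f q : G), (f q).2, rfl⟩
  have htop : ⨆ q : ps, K q (Pf q) = ⊤ := le_antisymm le_top (h ▸ hle)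
  let ε' := Subgroup.noncommPiCoprod hKcomm
  have hsurj' : Function.Surjective ε' := by
    rw [← MonoidHom.range_eq_top, Subgroup.noncommPiCoprod_range]
    exact htop
  have hcard1 : Nat.card G ≤ ∏ q : ps, Nat.card (K q (Pf q)) := by
    rw [← Nat.card_pi]
    exact Nat.card_le_card_of_surjective ε' hsurj'
  have hKcard : ∀ q : ps, Nat.card (K q (Pf q)) = Nat.card (Pf q) := by
    by_contra hcon
    push_neg at hcon
    obtain ⟨q0, hq0⟩ := hcon
    have hlt : ∏ q : ps, Nat.card (K q (Pf q)) < ∏ q : ps, Nat.card ((Pf q : Subgroup G)) := by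
      apply Finset.prod_lt_prod
      · intro i _; exact Nat.card_pos
      · intro i _
        haveI := Fact.mk (Nat.prime_of_mem_primeFactors i.2)
        exact Subgroup.card_le_of_le (hKle _ _)
      · refine ⟨q0, Finset.mem_univ _, lt_of_le_of_ne ?_ hq0⟩
        haveI := Fact.mk (Nat.prime_of_mem_primeFactors q0.2)
        exact Subgroup.card_le_of_le (hKle _ _)
    rw [hprodP] at hlt
    exact absurd hcard1 (not_le.mpr hlt)
  have hKeq : ∀ q : ps, K q (Pf q) = (Pf q : Subgroup G) := by
    intro q
    haveI := Fact.mk (Nat.prime_of_mem_primeFactors q.2)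
    exact Subgroup.eq_of_le_of_card_ge (hKle _ _) (le_of_eq (hKcard q).symm)
  constructor
  · intro p hp P
    haveI := Fact.mk hp
    by_cases hmem : p ∈ ps
    · haveI := Sylow.unique_of_normal (Pf p) (hnorm p (Pf p))
      have hP : P = Pf p := Subsingleton.elim _ _
      rw [hP]
      exact hKeq ⟨p, hmem⟩
    · have hnd : ¬ p ∣ Nat.card G := fun hd =>
        hmem (Nat.mem_primeFactors.mpr ⟨hp, hd, hG0⟩)
      have hPbot : (P : Subgroup G) = ⊥ := by
        apply Subgroup.eq_bot_of_card_eq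
        rw [Sylow.card_eq_multiplicity P, Nat.factorization_eq_zero_of_not_dvd hnd, pow_zero]
      rw [hPbot]
      refine le_antisymm ((Subgroup.closure_le _).mpr ?_) bot_le
      rintro x ⟨g, hg, rfl⟩
      have hg1 : g = 1 := by simpa using hg
      simp [hg1]
  · -- for each prime in ps, find a nontrivial sink element inside the Sylow subgroup
    have hxex : ∀ q : ps, ∃ x : G, x ∈ L ∧ x ∈ (Pf q : Subgroup G) ∧ x ≠ 1 := by
      intro q
      haveI := Fact.mk (Nat.prime_of_mem_primeFactors q.2)
      set P : Subgroup G := (Pf q : Subgroup G) with hPdef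
      have hiff : ∀ g : G, g ∈ P ↔ φ g ∈ P := fun g => hmemiff _ (Pf q) g
      haveI : Nontrivial P := by
        rw [← Finite.one_lt_card_iff_nontrivial]
        have : Nat.card P = (q : ℕ) ^ (Nat.card G).factorization q := hcardP q
        rw [this]
        refine Nat.one_lt_pow ?_ (Nat.prime_of_mem_primeFactors q.2).one_lt
        exact (Nat.Prime.factorization_pos_of_dvd (Nat.prime_of_mem_primeFactors q.2) hG0
          (Nat.mem_primeFactors.mp q.2).2.1).ne'
      let ψ : MulAut P := autOfMemIff φ P hiff
      have hψcoe : ∀ x : P, ((ψ x : P) : G) = φ x := fun x => rfl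
      have hclT : Subgroup.closure {y : P | ∃ u : P, y = u⁻¹ * ψ u} = ⊤ := by
        apply Subgroup.map_injective P.subtype_injective
        rw [MonoidHom.map_closure]
        have himg : P.subtype '' {y : P | ∃ u : P, y = u⁻¹ * ψ u} =
            {x : G | ∃ g ∈ P, x = g⁻¹ * φ g} := by
          ext x
          constructor
          · rintro ⟨y, ⟨u, rfl⟩, rfl⟩
            exact ⟨u, u.2, rfl⟩
          · rintro ⟨g, hg, rfl⟩
            exact ⟨(⟨g, hg⟩ : P)⁻¹ * ψ ⟨g, hg⟩, ⟨⟨g, hg⟩, rfl⟩, rfl⟩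
        rw [himg]
        have h2 : Subgroup.map P.subtype ⊤ = P := by
          rw [← MonoidHom.range_eq_map, Subgroup.range_subtype]
        rw [h2]
        exact hKeq q
      let A := Abelianization P
      let π : P →* A := Abelianization.of
      have hπs : Function.Surjective π := fun a =>
        QuotientGroup.induction_on a fun x => ⟨x, rfl⟩
      let ψA : A →* A := Abelianization.map ψ.toMonoidHom
      let θ : A →* A := MonoidHom.mk' (fun a => a⁻¹ * ψA a) (by
        intro a b
        show (a * b)⁻¹ * ψA (a * b) = (a⁻¹ * ψA a) * (b⁻¹ * ψA b)
        rw [map_mul, mul_inv]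
        exact mul_mul_mul_comm _ _ _ _)
      have hθπ : ∀ u : P, θ (π u) = π (u⁻¹ * ψ u) := by
        intro u
        show (π u)⁻¹ * ψA (π u) = π (u⁻¹ * ψ u)
        rw [map_mul, map_inv, Abelianization.map_of]
        rfl
      have hθs : Function.Surjective θ := by
        rw [← MonoidHom.range_eq_top, eq_top_iff]
        have h1 : Subgroup.map π ⊤ = ⊤ := by
          rw [← MonoidHom.range_eq_map]
          exact MonoidHom.range_eq_top.mpr hπs
        rw [← h1, ← hclT, MonoidHom.map_closure]
        refine (Subgroup.closure_le _).mpr ?_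
        rintro x ⟨y, ⟨u, rfl⟩, rfl⟩
        exact ⟨π u, hθπ u⟩
      haveI : Finite A := Finite.of_surjective (⇑π) hπs
      have hθi : Function.Injective θ := Finite.injective_iff_surjective.mpr hθs
      obtain ⟨u, hu⟩ : ∃ u : P, π u ≠ 1 := by
        have hct : commutator P ≠ ⊤ := commutator_ne_top_of_nilpotent P
        obtain ⟨u, hu⟩ : ∃ u : P, u ∉ commutator P := by
          by_contra hc
          push_neg at hc
          exact hct (eq_top_iff.mpr fun x _ => hc x)
        exact ⟨u, fun h1 => hu ((QuotientGroup.eq_one_iff u).mp h1)⟩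
      have hproj : ∀ n, π (lEngelAut ψ u n) = θ^[n] (π u) := by
        intro n
        induction n with
        | zero => rfl
        | succ n ih =>
            rw [Function.iterate_succ_apply', ← ih]
            exact (hθπ _).symm
      have hiter : ∀ n, lEngelAut ψ u n ≠ 1 := by
        intro n hn1
        have h1 : θ^[n] (π u) = 1 := by rw [← hproj n, hn1, map_one]
        have h2 : θ^[n] (1 : A) = 1 := Function.iterate_fixed (map_one θ) n
        exact hu ((Function.Injective.iterate hθi n) (h1.trans h2.symm))
      obtain ⟨N, hN⟩ := hL.1 (u : G)
      refine ⟨lEngelAut φ (u : G) N, hN N le_rfl, ?_, ?_⟩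
      · rw [lEngel_coe φ P ψ hψcoe u N]
        exact (lEngelAut ψ u N).2
      · rw [lEngel_coe φ P ψ hψcoe u N]
        intro hh
        exact hiter N (by exact_mod_cast hh)
    choose x hxL hxP hx1 using hxex
    have hinjx : Function.Injective fun q : ps => (⟨x q, hxL q⟩ : L) := by
      intro q1 q2 he
      have hxeq : x q1 = x q2 := congrArg Subtype.val he
      by_contra hne
      haveI := Fact.mk (Nat.prime_of_mem_primeFactors q1.2)
      haveI := Fact.mk (Nat.prime_of_mem_primeFactors q2.2)
      have hne' : (q1 : ℕ) ≠ (q2 : ℕ) := fun hh => hne (Subtype.ext hh)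
      have hdisj := IsPGroup.disjoint_of_ne (q1 : ℕ) (q2 : ℕ) hne' _ _
        (Pf q1).isPGroup' (Pf q2).isPGroup'
      exact hx1 q1 (Subgroup.disjoint_def.mp hdisj (hxP q1) (hxeq ▸ hxP q2))
    calc ps.card = Nat.card ps := by simp [Nat.card_eq_fintype_card]
      _ ≤ Nat.card L := Nat.card_le_card_of_injective _ hinjx
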